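/- Let S be a commutative semigroup, H a subsemigroup with H = ⋂_{i∈I} Sep(H_i) for some family (H_i)_{i∈I}. Then the quotient S/P(H;H_i,I) is a monoid, with identity the class of any element of H. -/
import Mathlib


def separator {S : Type*} [Mul S] (A : Set S) : Set S :=
  {x | (∀ a ∈ A, x * a ∈ A) ∧ (∀ a ∈ A, a * x ∈ A) ∧
       (∀ a ∉ A, x * a ∉ A) ∧ (∀ a ∉ A, a * x ∉ A)}

lemma sep_iff {S : Type*} [Mul S] {A : Set S} {a : S} (ha : a ∈ separator A) (t : S) :
    a * t ∈ A ↔ t ∈ A := by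
  obtain ⟨h1, _, h3, _⟩ := ha
  constructor
  · intro h; by_contra ht; exact h3 t ht h
  · exact h1 t

theorem quotient_is_monoid {S : Type*} [CommSemigroup S] {I : Type*} (H : Set S) (Hi : I → Set S)
    (hH : H.Nonempty) (hmul : ∀ a ∈ H, ∀ b ∈ H, a * b ∈ H)
    (hsep : H = ⋂ i : I, separator (Hi i))
    (c : Con S)
    (hc : ∀ a b : S, c a b ↔ ∀ i : I, ∀ x y : S, (x * a * y ∈ Hi i ↔ x * b * y ∈ Hi i)) :
    ∀ a ∈ H, ∀ x : c.Quotient, (a : c.Quotient) * x = x ∧ x * (a : c.Quotient) = x := by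
  intro a ha x
  have hasep : ∀ i, a ∈ separator (Hi i) := by
    rw [hsep] at ha; exact fun i => Set.mem_iInter.mp ha i
  have key : ∀ s : S, c (a * s) s := by
    intro s
    rw [hc]
    intro i x y
    have h1 : x * (a * s) * y = a * (x * s * y) := by
      ac_rfl
    rw [h1]
    exact sep_iff (hasep i) _
  induction x using Con.induction_on with
  | H s =>
    constructor
    · exact Con.eq c |>.mpr (key s)
    · show ((s * a : S) : c.Quotient) = (s : c.Quotient)
      rw [mul_comm]
      exact Con.eq c |>.mpr (key s)
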